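/- arXiv:2507.06900 — 3 statements merged into one kernel-verified Lean document; each statement's English description precedes it below -/
import Mathlib

section
/- Let F be a field and let 𝓜, α, β, γ ∈ F with 𝓜 ≠ 0. Let P, Q, N be 2×2 matrices over F with det(P) = det(Q) = det(N) = 1; set a := P₁₂, b := Q₁₂, c := N₁₂ and assume a, b, c are nonzero, tr(P) = 𝓜·a − α, tr(Q) = 𝓜·b − β, tr(N) = 𝓜·c − γ, Q = P·N − S(β), and a² + b² + c² + α·b·c + β·a·c + γ·a·b = 𝓜·a·b·c. Then the (1,2)-entry of P·Q − S(γ) equals (a² + γ·a·b + b²)/c, and the (1,2)-entry of Q·N − S(α) equals (b² + α·b·c + c²)/a. -/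
open Matrix

/-- The matrix `S(k) = [[k, 0], [k·𝓜, k]]`. -/
def Smat {F : Type*} [Field F] (M k : F) : Matrix (Fin 2) (Fin 2) F :=
  !![k, 0; k * M, k]

/-- Part (1) of the propagation theorem for cluster generalized Cohn triples: the
`(1,2)`-entries of `P·Q − S(γ)` and `Q·N − S(α)` are the generalized cluster
mutations of the cluster `(a,b,c)`. -/
theorem cohn_propagation_entry {F : Type*} [Field F] (M α β γ : F) (hM : M ≠ 0)
    (P Q N : Matrix (Fin 2) (Fin 2) F)
    (hPdet : P.det = 1) (hQdet : Q.det = 1) (hNdet : N.det = 1)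
    (a b c : F) (haP : P 0 1 = a) (hbQ : Q 0 1 = b) (hcN : N 0 1 = c)
    (ha : a ≠ 0) (hb : b ≠ 0) (hc : c ≠ 0)
    (htrP : P.trace = M * a - α) (htrQ : Q.trace = M * b - β)
    (htrN : N.trace = M * c - γ)
    (hQ : Q = P * N - Smat M β)
    (hcluster : a ^ 2 + b ^ 2 + c ^ 2 + α * b * c + β * a * c + γ * a * b
      = M * a * b * c) :
    (P * Q - Smat M γ) 0 1 = (a ^ 2 + γ * a * b + b ^ 2) / c ∧
    (Q * N - Smat M α) 0 1 = (b ^ 2 + α * b * c + c ^ 2) / a := by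
  -- Entry equations coming from `hQ`.
  have E5 : P 0 0 * c + a * N 1 1 = b := by
    rw [← hbQ, ← haP, ← hcN, hQ]
    simp [Smat, Matrix.mul_apply, Fin.sum_univ_two]
  have eQ00 : Q 0 0 = P 0 0 * N 0 0 + a * N 1 0 - β := by
    rw [← haP, hQ]; simp [Smat, Matrix.mul_apply, Fin.sum_univ_two]
  have eQ11 : Q 1 1 = P 1 0 * c + P 1 1 * N 1 1 - β := by
    rw [← hcN, hQ]; simp [Smat, Matrix.mul_apply, Fin.sum_univ_two]
  have E2 : N 0 0 + N 1 1 = M * c - γ := by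
    rw [← htrN, Matrix.trace_fin_two]
  have E4 : N 0 0 * N 1 1 - c * N 1 0 = 1 := by
    rw [← hNdet, Matrix.det_fin_two, hcN]
  have E6 : P 0 0 * N 0 0 + a * N 1 0 + P 1 0 * c + P 1 1 * N 1 1 = M * b + β := by
    have := htrQ
    rw [Matrix.trace_fin_two, eQ00, eQ11] at this
    linear_combination this
  constructor
  · have : (P * Q - Smat M γ) 0 1 = P 0 0 * b + a * Q 1 1 := by
      simp [Smat, Matrix.mul_apply, Fin.sum_univ_two, haP, hbQ]
    rw [this, eQ11, eq_div_iff hc]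
    linear_combination (b - a * N 0 0) * E5 + a * c * E6 - a * b * E2 + a ^ 2 * E4
  · have : (Q * N - Smat M α) 0 1 = Q 0 0 * c + b * N 1 1 := by
      simp [Smat, Matrix.mul_apply, Fin.sum_univ_two, hbQ, hcN]
    rw [this, eQ00, eq_div_iff ha]
    linear_combination a * N 0 0 * E5 - a ^ 2 * E4 + a * b * E2 - hcluster
end

section
/- Let F be a field and let 𝓜, α, β, γ ∈ F with 𝓜 ≠ 0. Let X, Y, Z be 2×2 matrices over F with det(X) = det(Y) = det(Z) = 1, X·Y·Z = T, tr(X) = −α, tr(Y) = −β, tr(Z) = −γ. Set a := X₁₂, b := Y₁₂, c := Z₁₂, assume a, b, c are nonzero and a² + b² + c² + α·b·c + β·a·c + γ·a·b = 𝓜·a·b·c. Then the (1,2)-entry of Y·Z·Y⁻¹ equals (a² + γ·a·b + b²)/c, and the (1,2)-entry of Y⁻¹·X·Y equals (b² + α·b·c + c²)/a. -/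
open Matrix

/-- The matrix `T = [[−1, 0], [𝓜, −1]]`. -/
def Tmat {F : Type*} [Field F] (M : F) : Matrix (Fin 2) (Fin 2) F :=
  !![-1, 0; M, -1]

/-- Part (1) of the propagation theorem for cluster Markov-monodromy triples: the
`(1,2)`-entries of `Y·Z·Y⁻¹` and `Y⁻¹·X·Y` are the generalized cluster mutations
of the cluster `(a,b,c)`. -/
theorem mm_propagation_entry {F : Type*} [Field F] (M α β γ : F) (hM : M ≠ 0)
    (X Y Z : Matrix (Fin 2) (Fin 2) F)
    (hX : X.det = 1) (hY : Y.det = 1) (hZ : Z.det = 1)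
    (hT : X * Y * Z = Tmat M)
    (htrX : X.trace = -α) (htrY : Y.trace = -β) (htrZ : Z.trace = -γ)
    (a b c : F) (haX : X 0 1 = a) (hbY : Y 0 1 = b) (hcZ : Z 0 1 = c)
    (ha : a ≠ 0) (hb : b ≠ 0) (hc : c ≠ 0)
    (hcluster : a ^ 2 + b ^ 2 + c ^ 2 + α * b * c + β * a * c + γ * a * b
      = M * a * b * c) :
    (Y * Z * Y⁻¹) 0 1 = (a ^ 2 + γ * a * b + b ^ 2) / c ∧
    (Y⁻¹ * X * Y) 0 1 = (b ^ 2 + α * b * c + c ^ 2) / a := by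
  have hXu : IsUnit X.det := by rw [hX]; exact isUnit_one
  have hZu : IsUnit Z.det := by rw [hZ]; exact isUnit_one
  have hXinv : X⁻¹ = !![X 1 1, -(X 0 1); -(X 1 0), X 0 0] := by
    rw [Matrix.inv_def, hX, Ring.inverse_one, one_smul, Matrix.adjugate_fin_two]
  have hYinv : Y⁻¹ = !![Y 1 1, -(Y 0 1); -(Y 1 0), Y 0 0] := by
    rw [Matrix.inv_def, hY, Ring.inverse_one, one_smul, Matrix.adjugate_fin_two]
  have hZinv : Z⁻¹ = !![Z 1 1, -(Z 0 1); -(Z 1 0), Z 0 0] := by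
    rw [Matrix.inv_def, hZ, Ring.inverse_one, one_smul, Matrix.adjugate_fin_two]
  have hXYeq : X * Y = Tmat M * Z⁻¹ := by
    rw [← hT, Matrix.mul_nonsing_inv_cancel_right _ _ hZu]
  have hYZeq : Y * Z = X⁻¹ * Tmat M := by
    rw [← hT, Matrix.mul_assoc, Matrix.nonsing_inv_mul_cancel_left _ _ hXu]
  have trX' : X 0 0 + X 1 1 = -α := by rw [← Matrix.trace_fin_two]; exact htrX
  have trY' : Y 0 0 + Y 1 1 = -β := by rw [← Matrix.trace_fin_two]; exact htrY
  have trZ' : Z 0 0 + Z 1 1 = -γ := by rw [← Matrix.trace_fin_two]; exact htrZ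
  -- (X*Y) 0 1 = c
  have e1 : X 0 0 * b + a * Y 1 1 = c := by
    have h := congrFun (congrFun hXYeq 0) 1
    rw [hZinv] at h
    simpa [Matrix.mul_apply, Fin.sum_univ_two, Tmat, haX, hbY, hcZ] using h
  -- (Y*Z) 0 1 = a
  have e2 : Y 0 0 * c + b * Z 1 1 = a := by
    have h := congrFun (congrFun hYZeq 0) 1
    rw [hXinv] at h
    simpa [Matrix.mul_apply, Fin.sum_univ_two, Tmat, haX, hbY, hcZ] using h
  constructor
  · rw [hYZeq, hXinv, hYinv]
    rw [eq_div_iff hc]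
    simp [Matrix.mul_apply, Fin.sum_univ_two, Tmat, haX, hbY, hcZ]
    linear_combination (b*c) * trX' + (a*c) * trY' + (-1 : F) * hcluster + (-c) * e1
  · rw [Matrix.mul_assoc, hXYeq, hYinv, hZinv]
    rw [eq_div_iff ha]
    simp [Matrix.mul_apply, Fin.sum_univ_two, Tmat, haX, hbY, hcZ]
    linear_combination (a*c) * trY' + (a*b) * trZ' + (-1 : F) * hcluster + (-a) * e2
end

section
/- Let F be a field and let 𝓜, α, β, γ ∈ F with 𝓜 ≠ 0. Let X, Y, Z be 2×2 matrices over F with det(X) = det(Y) = det(Z) = 1, X·Y·Z = T, tr(X) = −α, tr(Y) = −β, tr(Z) = −γ. Set a := X₁₂, b := Y₁₂, c := Z₁₂, assume a, b, c are nonzero and a² + b² + c² + α·b·c + β·a·c + γ·a·b = 𝓜·a·b·c. Then the (1,2)-entries of Z⁻¹·Y·Z and of X·Y·X⁻¹ are both equal to (a² + β·a·c + c²)/b. -/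
open Matrix

lemma inv_fin_two_of_det_one {F : Type*} [Field F] (A : Matrix (Fin 2) (Fin 2) F)
    (h : A.det = 1) : A⁻¹ = !![A 1 1, -(A 0 1); -(A 1 0), A 0 0] := by
  rw [Matrix.det_fin_two] at h
  apply Matrix.inv_eq_right_inv
  ext i j
  fin_cases i <;> fin_cases j <;>
    simp [Matrix.mul_apply, Fin.sum_univ_two] <;>
    first
      | ring1
      | linear_combination h

/-- Part (1) of the inverse propagation theorem for cluster Markov-monodromy
triples: the `(1,2)`-entries of `Z⁻¹·Y·Z` and `X·Y·X⁻¹` are both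
`(a² + βac + c²)/b`. -/
theorem mm_inverse_propagation_entry {F : Type*} [Field F] (M α β γ : F) (hM : M ≠ 0)
    (X Y Z : Matrix (Fin 2) (Fin 2) F)
    (hX : X.det = 1) (hY : Y.det = 1) (hZ : Z.det = 1)
    (hT : X * Y * Z = Tmat M)
    (htrX : X.trace = -α) (htrY : Y.trace = -β) (htrZ : Z.trace = -γ)
    (a b c : F) (haX : X 0 1 = a) (hbY : Y 0 1 = b) (hcZ : Z 0 1 = c)
    (ha : a ≠ 0) (hb : b ≠ 0) (hc : c ≠ 0)
    (hcluster : a ^ 2 + b ^ 2 + c ^ 2 + α * b * c + β * a * c + γ * a * b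
      = M * a * b * c) :
    (Z⁻¹ * Y * Z) 0 1 = (a ^ 2 + β * a * c + c ^ 2) / b ∧
    (X * Y * X⁻¹) 0 1 = (a ^ 2 + β * a * c + c ^ 2) / b := by
  have hXu : IsUnit X.det := by rw [hX]; exact isUnit_one
  have hZu : IsUnit Z.det := by rw [hZ]; exact isUnit_one
  have hXi := inv_fin_two_of_det_one X hX
  have hZi := inv_fin_two_of_det_one Z hZ
  have hYexp : Y = X⁻¹ * (Tmat M * Z⁻¹) := by
    rw [← hT]
    rw [Matrix.mul_nonsing_inv_cancel_right _ _ hZu,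
      Matrix.nonsing_inv_mul_cancel_left _ _ hXu]
  have hdX : X 0 0 * X 1 1 - a * X 1 0 = 1 := by
    rw [Matrix.det_fin_two, haX] at hX; linear_combination hX
  have hdZ : Z 0 0 * Z 1 1 - c * Z 1 0 = 1 := by
    rw [Matrix.det_fin_two, hcZ] at hZ; linear_combination hZ
  have hb' : b = c * X 1 1 + M * a * c + a * Z 0 0 := by
    have h01 := congrFun (congrFun hYexp 0) 1
    rw [hXi, hZi] at h01
    simp [Tmat, Matrix.mul_apply, Fin.sum_univ_two, haX, hcZ, hbY] at h01
    linear_combination h01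
  have hβ :
      -β = -(X 1 1 * Z 1 1) - a * M * Z 1 1 - a * Z 1 0
        - X 1 0 * c - X 0 0 * c * M - X 0 0 * Z 0 0 := by
    have h00 := congrFun (congrFun hYexp 0) 0
    have h11 := congrFun (congrFun hYexp 1) 1
    rw [hXi, hZi] at h00 h11
    simp [Tmat, Matrix.mul_apply, Fin.sum_univ_two, haX, hcZ] at h00 h11
    rw [Matrix.trace_fin_two] at htrY
    linear_combination h00 + h11 - htrY
  have key : (X 0 0 * c + a * Z 1 1) * b = a ^ 2 + β * a * c + c ^ 2 := by
    linear_combination (X 0 0 * c + a * Z 1 1) * hb' + a * c * hβ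
      + c ^ 2 * hdX + a ^ 2 * hdZ
  have hW : (X * Z) 0 1 = X 0 0 * c + a * Z 1 1 := by
    simp [Matrix.mul_apply, Fin.sum_univ_two, haX, hcZ]
  have hWd : (X * Z).det = 1 := by rw [Matrix.det_mul, hX, hZ, one_mul]
  have hWi := inv_fin_two_of_det_one (X * Z) hWd
  have cancel : X⁻¹ * (X * (Y * Z)) = Y * Z :=
    Matrix.nonsing_inv_mul_cancel_left _ _ hXu
  have e1 : Z⁻¹ * Y * Z = (X * Z)⁻¹ * Tmat M := by
    rw [← hT, Matrix.mul_inv_rev, mul_assoc X Y Z, mul_assoc Z⁻¹ X⁻¹, cancel,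
      ← mul_assoc]
  have e2 : X * Y * X⁻¹ = Tmat M * (X * Z)⁻¹ := by
    rw [← hT, Matrix.mul_inv_rev, mul_assoc (X * Y) Z, ← mul_assoc Z Z⁻¹,
      Matrix.mul_nonsing_inv _ hZu, one_mul]
  have key' : X 0 0 * c + a * Z 1 1 = (a ^ 2 + β * a * c + c ^ 2) / b := by
    rw [eq_div_iff hb]; exact key
  have hW2 : (X * Z) 0 1 = X 0 0 * Z 0 1 + X 0 1 * Z 1 1 := by
    simp [Matrix.mul_apply, Fin.sum_univ_two]
  constructor
  · rw [e1, hWi, ← key']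
    simp [Tmat, Matrix.mul_apply, Fin.sum_univ_two]
    linear_combination hW - hW2
  · rw [e2, hWi, ← key']
    simp [Tmat, Matrix.mul_apply, Fin.sum_univ_two]
    linear_combination hW - hW2
end
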